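/- Let d ≥ 1, let m ≥ 1 be an integer and n ≥ 2 an integer with m^d·6^d·5^{dm} ≤ √n, let J = {1,3,…,2m−1}^d, and let ε = c·n^{−1/2} for some c ∈ (0,1/2). Then for every α = (α_j)_{j∈J} ∈ {0,1}^J and every u ∈ ℝ^d, (1−c)·v(u) ≤ v(u) + ε·Σ_{j∈J} α_j v_j(u) ≤ (1+c)·v(u), where v(u) = φ(u_1)···φ(u_d) and v_j(u) = v_{j_1}(u_1)···v_{j_d}(u_d) with v_{j_i}(u) := 2^{5/4}·√π·√(5^{j_i}/j_i!)·φ(√3·u)·H_{j_i}(4u/√5). -/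

import Mathlib

open Real MeasureTheory

noncomputable def gauss (x : ℝ) : ℝ := Real.exp (-(x^2)/2) / Real.sqrt (2*Real.pi)

/-- The probabilists' Hermite polynomial `H_j` evaluated at a real number. -/
noncomputable def hermiteEval (j : ℕ) (x : ℝ) : ℝ :=
  Polynomial.aeval x (Polynomial.hermite j)

/-- The Hermite perturbation function
`v_j(u) = 2^{5/4} √π √(5^j/j!) φ(√3 u) H_j(4u/√5)`. -/
noncomputable def vPert (j : ℕ) (u : ℝ) : ℝ :=
  2 ^ ((5 : ℝ)/4) * Real.sqrt Real.pi *
    Real.sqrt (5 ^ j / (Nat.factorial j)) * gauss (Real.sqrt 3 * u) *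
    hermiteEval j (4 * u / Real.sqrt 5)

/- The index set `J = {1, 3, …, 2m-1}^d` is encoded as `Fin d → Fin m`, with
`k : Fin d → Fin m` corresponding to the multi-index `j` with `j i = 2 * k i + 1`. -/

section Aux
open Complex

noncomputable def cw (a ξ : ℝ) : ℂ := (ξ : ℂ) + Complex.I * a

noncomputable def ker (a : ℝ) (j : ℕ) (x ξ : ℝ) : ℂ :=
  (Complex.I * cw a ξ) ^ j * Complex.exp (-(cw a ξ) ^ 2 / 2 + Complex.I * cw a ξ * x)

lemma sqrt_pow' {x : ℝ} (hx : 0 ≤ x) (n : ℕ) : Real.sqrt (x ^ n) = Real.sqrt x ^ n := by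
  conv_lhs => rw [← Real.sq_sqrt hx, ← pow_mul, mul_comm 2 n, pow_mul]
  exact Real.sqrt_sq (pow_nonneg (Real.sqrt_nonneg x) n)

lemma norm_ker (a : ℝ) (j : ℕ) (x ξ : ℝ) :
    ‖ker a j x ξ‖ = Real.sqrt (ξ ^ 2 + a ^ 2) ^ j * Real.exp ((a ^ 2 - ξ ^ 2) / 2 - a * x) := by
  have h1 : ‖cw a ξ‖ = Real.sqrt (ξ ^ 2 + a ^ 2) := by
    rw [cw, mul_comm, Complex.norm_add_mul_I]
  have h2 : (-(cw a ξ) ^ 2 / 2 + Complex.I * cw a ξ * x).re = (a ^ 2 - ξ ^ 2) / 2 - a * x := by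
    simp [cw, pow_two, Complex.add_re, Complex.mul_re, Complex.mul_im, Complex.div_re,
      Complex.normSq, Complex.I_re, Complex.I_im]
    ring
  rw [ker, norm_mul, norm_pow, norm_mul,
    Complex.norm_I, one_mul, h1, Complex.norm_exp, h2]

lemma pow_le_factorial_mul_exp {x : ℝ} (hx : 0 ≤ x) (n : ℕ) :
    x ^ n ≤ (n.factorial : ℝ) * Real.exp x := by
  have h1 : x ^ n / (n.factorial : ℝ) ≤ Real.exp x := by
    refine le_trans ?_ (Real.sum_le_exp_of_nonneg hx (n + 1))
    exact Finset.single_le_sum (f := fun i => x ^ i / (i.factorial : ℝ))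
      (fun i _ => by positivity) (Finset.self_mem_range_succ n)
  have h2 : (0:ℝ) < n.factorial := by exact_mod_cast n.factorial_pos
  calc x ^ n = (x ^ n / n.factorial) * n.factorial := by field_simp
  _ ≤ Real.exp x * n.factorial := by apply mul_le_mul_of_nonneg_right h1 h2.le
  _ = n.factorial * Real.exp x := by ring

lemma sqrt_add_sq_le (ξ a : ℝ) : Real.sqrt (ξ ^ 2 + a ^ 2) ≤ |ξ| + |a| := by
  have h : ξ ^ 2 + a ^ 2 ≤ (|ξ| + |a|) ^ 2 := by
    nlinarith [_root_.sq_abs ξ, _root_.sq_abs a, mul_nonneg (abs_nonneg ξ) (abs_nonneg a)]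
  calc Real.sqrt (ξ ^ 2 + a ^ 2) ≤ Real.sqrt ((|ξ| + |a|) ^ 2) := Real.sqrt_le_sqrt h
  _ = |ξ| + |a| := Real.sqrt_sq (by positivity)

lemma integrable_base (j : ℕ) (a : ℝ) :
    Integrable (fun ξ : ℝ => Real.sqrt (ξ ^ 2 + a ^ 2) ^ j * Real.exp (-ξ ^ 2 / 2)) := by
  have hcont : Continuous fun ξ : ℝ => Real.sqrt (ξ ^ 2 + a ^ 2) ^ j * Real.exp (-ξ ^ 2 / 2) := by
    fun_prop
  refine ((integrable_exp_neg_mul_sq (show (0:ℝ) < 1/4 by norm_num)).const_mul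
    ((j.factorial : ℝ) * Real.exp (|a| + 1))).mono' hcont.aestronglyMeasurable ?_
  filter_upwards with ξ
  have h0 : (0:ℝ) ≤ Real.sqrt (ξ ^ 2 + a ^ 2) ^ j * Real.exp (-ξ ^ 2 / 2) := by positivity
  rw [Real.norm_of_nonneg h0]
  have hs : Real.sqrt (ξ ^ 2 + a ^ 2) ^ j ≤ (j.factorial : ℝ) * Real.exp (|ξ| + |a|) := by
    calc Real.sqrt (ξ ^ 2 + a ^ 2) ^ j ≤ (|ξ| + |a|) ^ j := by
          exact pow_le_pow_left₀ (Real.sqrt_nonneg _) (sqrt_add_sq_le ξ a) j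
    _ ≤ (j.factorial : ℝ) * Real.exp (|ξ| + |a|) :=
          pow_le_factorial_mul_exp (by positivity) j
  calc Real.sqrt (ξ ^ 2 + a ^ 2) ^ j * Real.exp (-ξ ^ 2 / 2)
      ≤ ((j.factorial : ℝ) * Real.exp (|ξ| + |a|)) * Real.exp (-ξ ^ 2 / 2) := by
        exact mul_le_mul_of_nonneg_right hs (Real.exp_nonneg _)
  _ = (j.factorial : ℝ) * Real.exp (|ξ| + |a| + -ξ ^ 2 / 2) := by
        rw [mul_assoc, ← Real.exp_add]
  _ ≤ (j.factorial : ℝ) * Real.exp ((|a| + 1) + -(1/4) * ξ ^ 2) := by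
        have : |ξ| + |a| + -ξ ^ 2 / 2 ≤ (|a| + 1) + -(1/4) * ξ ^ 2 := by
          nlinarith [_root_.sq_abs ξ, sq_nonneg (|ξ| - 2)]
        exact mul_le_mul_of_nonneg_left (Real.exp_le_exp.mpr this) (by positivity)
  _ = (j.factorial : ℝ) * Real.exp (|a| + 1) * Real.exp (-(1/4) * ξ ^ 2) := by
        rw [Real.exp_add, mul_assoc]

lemma key_base (a x : ℝ) :
    ∫ ξ : ℝ, ker a 0 x ξ =
      ((Real.sqrt (2 * Real.pi) * Real.exp (-(x ^ 2 / 2)) : ℝ) : ℂ) := by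
  have h : ∀ ξ : ℝ, ker a 0 x ξ =
      Complex.exp ((-(1/2) : ℂ) * (ξ:ℂ) ^ 2 + (Complex.I * x - Complex.I * a) * (ξ:ℂ)
        + ((a:ℂ) ^ 2 / 2 - (a:ℂ) * (x:ℂ))) := by
    intro ξ
    rw [ker, pow_zero, one_mul, cw]
    congr 1
    have hI : (Complex.I : ℂ) ^ 2 = -1 := Complex.I_sq
    linear_combination ((a:ℂ) * x - (a:ℂ)^2/2) * hI
  rw [show (fun ξ : ℝ => ker a 0 x ξ) = _ from funext h]
  rw [integral_cexp_quadratic (by norm_num : ((-(1/2):ℂ)).re < 0)]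
  have h2 : ((π : ℂ) / -(-(1/2))) ^ (1/2 : ℂ) = ((Real.sqrt (2 * Real.pi) : ℝ) : ℂ) := by
    rw [show ((π : ℂ) / -(-(1/2))) = ((2 * Real.pi : ℝ) : ℂ) by push_cast; ring]
    rw [Real.sqrt_eq_rpow, Complex.ofReal_cpow Real.two_pi_pos.le]
    norm_num
  have h3 : ((a:ℂ) ^ 2 / 2 - (a:ℂ) * (x:ℂ)) - (Complex.I * x - Complex.I * a) ^ 2 / (4 * (-(1/2))) =
      ((-(x ^ 2 / 2) : ℝ) : ℂ) := by
    have hI : (Complex.I : ℂ) ^ 2 = -1 := Complex.I_sq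
    push_cast
    linear_combination (((x:ℂ) - a)^2/2) * hI
  rw [h2, h3, ← Complex.ofReal_exp, ← Complex.ofReal_mul]

lemma cont_ker (a : ℝ) (j : ℕ) (x : ℝ) : Continuous fun ξ : ℝ => ker a j x ξ := by
  unfold ker cw; fun_prop

lemma integrable_ker (a : ℝ) (j : ℕ) (x : ℝ) : Integrable (fun ξ : ℝ => ker a j x ξ) := by
  refine ((integrable_base j a).const_mul (Real.exp (a ^ 2 / 2 - a * x))).mono'
    (cont_ker a j x).aestronglyMeasurable ?_
  filter_upwards with ξ
  rw [norm_ker]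
  apply le_of_eq
  rw [show (a ^ 2 - ξ ^ 2) / 2 - a * x = (a ^ 2 / 2 - a * x) + -ξ ^ 2 / 2 by ring, Real.exp_add]
  ring

lemma key (a : ℝ) (j : ℕ) (x : ℝ) :
    ∫ ξ : ℝ, ker a j x ξ =
      ((Real.sqrt (2 * Real.pi) * ((-1 : ℝ) ^ j *
        Polynomial.aeval x (Polynomial.hermite j) * Real.exp (-(x ^ 2 / 2))) : ℝ) : ℂ) := by
  induction j generalizing x with
  | zero => simpa using key_base a x
  | succ j IH =>
    set x₀ := x
    -- derivative of the integral via dominated convergence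
    have hDC := hasDerivAt_integral_of_dominated_loc_of_deriv_le
      (F := fun x ξ => ker a j x ξ) (F' := fun x ξ => ker a (j + 1) x ξ) (x₀ := x₀)
      (bound := fun ξ => Real.sqrt (ξ ^ 2 + a ^ 2) ^ (j + 1) *
        Real.exp ((a ^ 2 - ξ ^ 2) / 2 + |a| * (|x₀| + 1)))
      (Metric.ball_mem_nhds x₀ one_pos)
      (Filter.Eventually.of_forall fun x => (cont_ker a j x).aestronglyMeasurable)
      (integrable_ker a j x₀)
      (cont_ker a (j + 1) x₀).aestronglyMeasurable
      ?_ ?_ ?_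
    · -- conclude
      have hL : HasDerivAt (fun y : ℝ => ∫ ξ : ℝ, ker a j y ξ)
          (∫ ξ : ℝ, ker a (j + 1) x₀ ξ) x₀ := hDC.2
      have heqfun : (fun y : ℝ => ∫ ξ : ℝ, ker a j y ξ) =
          fun y : ℝ => (((Real.sqrt (2 * Real.pi) * (-1 : ℝ) ^ j) *
            (Polynomial.aeval y (Polynomial.hermite j) * Real.exp (-(y ^ 2 / 2))) : ℝ) : ℂ) := by
        funext y; rw [IH y]; push_cast; ring
      rw [heqfun] at hL
      have hgauss : HasDerivAt (fun y : ℝ => Real.exp (-(y ^ 2 / 2)))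
          (-x₀ * Real.exp (-(x₀ ^ 2 / 2))) x₀ := by
        have h := (((hasDerivAt_pow 2 x₀).div_const 2).neg).exp
        refine h.congr_deriv ?_
        simp only [Pi.neg_apply]; push_cast; ring
      have hR : HasDerivAt
          (fun y : ℝ => ((Real.sqrt (2 * Real.pi) * (-1 : ℝ) ^ j) *
            (Polynomial.aeval y (Polynomial.hermite j) * Real.exp (-(y ^ 2 / 2)))))
          (Real.sqrt (2 * Real.pi) * ((-1 : ℝ) ^ (j + 1) *
            Polynomial.aeval x₀ (Polynomial.hermite (j + 1)) * Real.exp (-(x₀ ^ 2 / 2)))) x₀ := by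
        have h := ((Polynomial.hasDerivAt_aeval (Polynomial.hermite j) x₀).mul hgauss).const_mul
          (Real.sqrt (2 * Real.pi) * (-1 : ℝ) ^ j)
        refine h.congr_deriv ?_
        have hs : Polynomial.aeval x₀ (Polynomial.hermite (j + 1)) =
            x₀ * Polynomial.aeval x₀ (Polynomial.hermite j) -
              Polynomial.aeval x₀ (Polynomial.derivative (Polynomial.hermite j)) := by
          rw [Polynomial.hermite_succ]; simp
        rw [hs, pow_succ]
        ring
      have hRC := hR.ofReal_comp
      exact hL.unique hRC
    · -- h_bound
      filter_upwards with ξ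
      intro x hx
      rw [norm_ker]
      have hxb : |x| ≤ |x₀| + 1 := by
        have hd : |x - x₀| < 1 := by
          have := Metric.mem_ball.mp hx
          rwa [Real.dist_eq] at this
        calc |x| = |x₀ + (x - x₀)| := by ring_nf
        _ ≤ |x₀| + |x - x₀| := abs_add_le _ _
        _ ≤ |x₀| + 1 := by linarith
      have hax : -(a * x) ≤ |a| * (|x₀| + 1) := by
        calc -(a * x) ≤ |a * x| := neg_le_abs _
        _ = |a| * |x| := abs_mul a x
        _ ≤ |a| * (|x₀| + 1) := mul_le_mul_of_nonneg_left hxb (abs_nonneg a)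
      refine mul_le_mul_of_nonneg_left (Real.exp_le_exp.mpr ?_) (by positivity)
      linarith
    · -- bound integrable
      have heq : (fun ξ : ℝ => Real.sqrt (ξ ^ 2 + a ^ 2) ^ (j + 1) *
          Real.exp ((a ^ 2 - ξ ^ 2) / 2 + |a| * (|x₀| + 1))) =
          fun ξ : ℝ => Real.exp (a ^ 2 / 2 + |a| * (|x₀| + 1)) *
            (Real.sqrt (ξ ^ 2 + a ^ 2) ^ (j + 1) * Real.exp (-ξ ^ 2 / 2)) := by
        funext ξ
        rw [show (a ^ 2 - ξ ^ 2) / 2 + |a| * (|x₀| + 1) =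
          (a ^ 2 / 2 + |a| * (|x₀| + 1)) + -ξ ^ 2 / 2 by ring, Real.exp_add]
        ring
      rw [heq]
      exact (integrable_base (j + 1) a).const_mul _
    · -- h_diff
      filter_upwards with ξ
      intro x hx
      have h0 : HasDerivAt (fun y : ℝ => ((y : ℝ) : ℂ)) 1 x := by
        simpa using (hasDerivAt_id x).ofReal_comp
      have hlin : HasDerivAt (fun y : ℝ => -(cw a ξ) ^ 2 / 2 + Complex.I * cw a ξ * (y : ℂ))
          (Complex.I * cw a ξ) x := by
        simpa using ((h0.const_mul (Complex.I * cw a ξ)).const_add (-(cw a ξ) ^ 2 / 2))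
      have hexp := hlin.cexp
      have h2 := hexp.const_mul ((Complex.I * cw a ξ) ^ j)
      have : ker a (j + 1) x ξ = (Complex.I * cw a ξ) ^ j *
          (Complex.exp (-(cw a ξ) ^ 2 / 2 + Complex.I * cw a ξ * x) * (Complex.I * cw a ξ)) := by
        rw [ker]; ring
      rw [show (fun y : ℝ => ker a j y ξ) = fun y : ℝ => (Complex.I * cw a ξ) ^ j *
          Complex.exp (-(cw a ξ) ^ 2 / 2 + Complex.I * cw a ξ * (y : ℂ)) from rfl, this]
      exact h2

lemma hermite_bound (j : ℕ) (x : ℝ) :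
    |Polynomial.aeval x (Polynomial.hermite j)| ≤
      Real.sqrt ((((j : ℝ) + 1) / Real.exp 1) ^ j) * Real.sqrt ((j : ℝ) + 1) *
        Real.exp (5 * x ^ 2 / 16) := by
  set a : ℝ := x / 4 with ha
  set T : ℝ := (j : ℝ) + 1 with hTdef
  have hT : 0 < T := by positivity
  set C : ℝ := Real.sqrt ((T / Real.exp 1) ^ j) *
    Real.exp (a ^ 2 / 2 - a * x + j * a ^ 2 / (2 * T)) with hC
  -- pointwise bound on the norm of the kernel
  have hpt : ∀ ξ : ℝ, ‖ker a j x ξ‖ ≤ C * Real.exp (-(1 / (2 * T)) * ξ ^ 2) := by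
    intro ξ
    rw [norm_ker]
    set X : ℝ := ξ ^ 2 + a ^ 2 with hX
    have hX0 : 0 ≤ X := by positivity
    have step1 : X ≤ T / Real.exp 1 * Real.exp (X / T) := by
      have h := Real.add_one_le_exp (X / T - 1)
      have h2 : X / T ≤ Real.exp (X / T) / Real.exp 1 := by
        rw [← Real.exp_sub]; linarith
      calc X = T * (X / T) := by field_simp
      _ ≤ T * (Real.exp (X / T) / Real.exp 1) := by
          exact mul_le_mul_of_nonneg_left h2 hT.le
      _ = T / Real.exp 1 * Real.exp (X / T) := by ring
    have step2 : X ^ j ≤ (T / Real.exp 1) ^ j * Real.exp ((j : ℝ) * X / T) := by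
      calc X ^ j ≤ (T / Real.exp 1 * Real.exp (X / T)) ^ j := by
            exact pow_le_pow_left₀ hX0 step1 j
      _ = (T / Real.exp 1) ^ j * Real.exp (X / T) ^ j := mul_pow _ _ j
      _ = (T / Real.exp 1) ^ j * Real.exp ((j : ℝ) * X / T) := by
            rw [show (j : ℝ) * X / T = (j : ℝ) * (X / T) by ring, Real.exp_nat_mul]
    have step3 : Real.sqrt X ^ j ≤ Real.sqrt ((T / Real.exp 1) ^ j) *
        Real.exp ((j : ℝ) * X / (2 * T)) := by
      rw [← sqrt_pow' hX0]
      calc Real.sqrt (X ^ j) ≤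
          Real.sqrt ((T / Real.exp 1) ^ j * Real.exp ((j : ℝ) * X / T)) :=
            Real.sqrt_le_sqrt step2
      _ = Real.sqrt ((T / Real.exp 1) ^ j) * Real.sqrt (Real.exp ((j : ℝ) * X / T)) :=
            Real.sqrt_mul (by positivity) _
      _ = Real.sqrt ((T / Real.exp 1) ^ j) * Real.exp ((j : ℝ) * X / (2 * T)) := by
            rw [show Real.exp ((j : ℝ) * X / T) = Real.exp ((j : ℝ) * X / (2 * T)) ^ 2 by
              rw [sq, ← Real.exp_add]; congr 1; field_simp; ring]
            rw [Real.sqrt_sq (Real.exp_nonneg _)]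
    calc Real.sqrt X ^ j * Real.exp ((a ^ 2 - ξ ^ 2) / 2 - a * x)
        ≤ (Real.sqrt ((T / Real.exp 1) ^ j) * Real.exp ((j : ℝ) * X / (2 * T))) *
            Real.exp ((a ^ 2 - ξ ^ 2) / 2 - a * x) :=
          mul_le_mul_of_nonneg_right step3 (Real.exp_nonneg _)
    _ = C * Real.exp (-(1 / (2 * T)) * ξ ^ 2) := by
        rw [hC, hX]
        rw [mul_assoc, ← Real.exp_add, mul_assoc, ← Real.exp_add]
        congr 2
        have hTne : T ≠ 0 := hT.ne'
        have hj : (j : ℝ) = T - 1 := by rw [hTdef]; ring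
        field_simp
        ring
  -- integral bound
  have hint1 : ∫ ξ : ℝ, ‖ker a j x ξ‖ ≤ C * (Real.sqrt (2 * Real.pi) * Real.sqrt T) := by
    have hInt1 : Integrable (fun ξ : ℝ => ‖ker a j x ξ‖) := (integrable_ker a j x).norm
    have hInt2 : Integrable (fun ξ : ℝ => C * Real.exp (-(1 / (2 * T)) * ξ ^ 2)) :=
      (integrable_exp_neg_mul_sq (by positivity)).const_mul C
    calc ∫ ξ : ℝ, ‖ker a j x ξ‖ ≤ ∫ ξ : ℝ, C * Real.exp (-(1 / (2 * T)) * ξ ^ 2) :=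
          integral_mono hInt1 hInt2 hpt
    _ = C * ∫ ξ : ℝ, Real.exp (-(1 / (2 * T)) * ξ ^ 2) := integral_const_mul C _
    _ = C * Real.sqrt (Real.pi / (1 / (2 * T))) := by rw [integral_gaussian]
    _ = C * (Real.sqrt (2 * Real.pi) * Real.sqrt T) := by
        rw [← Real.sqrt_mul (by positivity)]
        congr 1
        field_simp
  have hnorm : Real.sqrt (2 * Real.pi) *
      (|Polynomial.aeval x (Polynomial.hermite j)| * Real.exp (-(x ^ 2 / 2))) =
      ‖∫ ξ : ℝ, ker a j x ξ‖ := by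
    rw [key, Complex.norm_real, Real.norm_eq_abs, abs_mul, abs_mul, abs_mul, _root_.abs_pow, abs_neg,
      abs_one, one_pow, one_mul, _root_.abs_of_nonneg (Real.sqrt_nonneg _),
      _root_.abs_of_pos (Real.exp_pos _)]
  have hmain : Real.sqrt (2 * Real.pi) *
      (|Polynomial.aeval x (Polynomial.hermite j)| * Real.exp (-(x ^ 2 / 2))) ≤
      C * (Real.sqrt (2 * Real.pi) * Real.sqrt T) := by
    rw [hnorm]
    exact (norm_integral_le_integral_norm _).trans hint1
  have hsqrt2pi : 0 < Real.sqrt (2 * Real.pi) := Real.sqrt_pos.mpr (by positivity)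
  have h5 : |Polynomial.aeval x (Polynomial.hermite j)| * Real.exp (-(x ^ 2 / 2)) ≤
      C * Real.sqrt T := by
    apply le_of_mul_le_mul_left _ hsqrt2pi
    calc Real.sqrt (2 * Real.pi) *
        (|Polynomial.aeval x (Polynomial.hermite j)| * Real.exp (-(x ^ 2 / 2))) ≤
        C * (Real.sqrt (2 * Real.pi) * Real.sqrt T) := hmain
    _ = Real.sqrt (2 * Real.pi) * (C * Real.sqrt T) := by ring
  -- now unfold C and push exponents
  have hexp : C * Real.sqrt T * Real.exp (x ^ 2 / 2) ≤
      Real.sqrt ((T / Real.exp 1) ^ j) * Real.sqrt T * Real.exp (5 * x ^ 2 / 16) := by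
    rw [hC]
    have harg : a ^ 2 / 2 - a * x + (j : ℝ) * a ^ 2 / (2 * T) + x ^ 2 / 2 ≤ 5 * x ^ 2 / 16 := by
      have hja : (j : ℝ) * a ^ 2 / (2 * T) ≤ a ^ 2 / 2 := by
        rw [div_le_div_iff₀ (by positivity) (by norm_num)]
        nlinarith [sq_nonneg a, hT]
      rw [ha] at hja ⊢
      nlinarith [hja]
    calc Real.sqrt ((T / Real.exp 1) ^ j) *
          Real.exp (a ^ 2 / 2 - a * x + (j : ℝ) * a ^ 2 / (2 * T)) * Real.sqrt T *
          Real.exp (x ^ 2 / 2)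
        = Real.sqrt ((T / Real.exp 1) ^ j) * Real.sqrt T *
            Real.exp (a ^ 2 / 2 - a * x + (j : ℝ) * a ^ 2 / (2 * T) + x ^ 2 / 2) := by
          rw [show Real.exp (a ^ 2 / 2 - a * x + (j : ℝ) * a ^ 2 / (2 * T) + x ^ 2 / 2) =
            Real.exp (a ^ 2 / 2 - a * x + (j : ℝ) * a ^ 2 / (2 * T)) * Real.exp (x ^ 2 / 2)
            from (Real.exp_add _ _)]
          ring
    _ ≤ Real.sqrt ((T / Real.exp 1) ^ j) * Real.sqrt T * Real.exp (5 * x ^ 2 / 16) := by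
          exact mul_le_mul_of_nonneg_left (Real.exp_le_exp.mpr harg) (by positivity)
  have hfin : |Polynomial.aeval x (Polynomial.hermite j)| =
      (|Polynomial.aeval x (Polynomial.hermite j)| * Real.exp (-(x ^ 2 / 2))) *
        Real.exp (x ^ 2 / 2) := by
    rw [mul_assoc, ← Real.exp_add]
    simp
  rw [hfin]
  calc (|Polynomial.aeval x (Polynomial.hermite j)| * Real.exp (-(x ^ 2 / 2))) *
      Real.exp (x ^ 2 / 2) ≤ (C * Real.sqrt T) * Real.exp (x ^ 2 / 2) :=
        mul_le_mul_of_nonneg_right h5 (Real.exp_nonneg _)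
  _ ≤ Real.sqrt ((T / Real.exp 1) ^ j) * Real.sqrt T * Real.exp (5 * x ^ 2 / 16) := hexp

lemma gauss_pos (x : ℝ) : 0 < gauss x := by
  unfold gauss
  have h2 : 0 < Real.sqrt (2 * Real.pi) := Real.sqrt_pos.mpr (by positivity)
  positivity

lemma Te_le (j : ℕ) : (((j:ℝ)+1) / Real.exp 1) ^ j ≤ Real.exp 1 * (j.factorial : ℝ) := by
  have h := pow_le_factorial_mul_exp (x := ((j:ℝ)+1)) (by positivity) (j+1)
  have hT : (0:ℝ) < (j:ℝ)+1 := by positivity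
  have hfact : (((j+1).factorial : ℕ) : ℝ) = ((j:ℝ)+1) * (j.factorial : ℝ) := by
    rw [Nat.factorial_succ]; push_cast; ring
  have hexp : Real.exp ((j:ℝ)+1) = Real.exp j * Real.exp 1 := by rw [← Real.exp_add]
  rw [hfact, hexp, pow_succ] at h
  have h2 : ((j:ℝ)+1)^j ≤ (j.factorial : ℝ) * Real.exp j * Real.exp 1 := by
    have hfj : (0:ℝ) < (j.factorial : ℝ) := by exact_mod_cast j.factorial_pos
    nlinarith [pow_nonneg hT.le j, hT, Real.exp_pos (j:ℝ), Real.exp_pos (1:ℝ), hfj]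
  have hej : (Real.exp 1)^j = Real.exp j := by
    rw [← Real.exp_nat_mul]; simp
  rw [div_pow, div_le_iff₀ (by positivity), hej]
  calc ((j:ℝ)+1)^j ≤ (j.factorial : ℝ) * Real.exp j * Real.exp 1 := h2
  _ = Real.exp 1 * (j.factorial : ℝ) * Real.exp j := by ring

lemma vPert_bound (j : ℕ) (u : ℝ) :
    |vPert j u| ≤ (2:ℝ)^((5:ℝ)/4) * Real.sqrt Real.pi *
      Real.sqrt (Real.exp 1 * 5^j * ((j:ℝ)+1)) * gauss u := by
  have hx2 : 5 * (4 * u / Real.sqrt 5) ^ 2 / 16 = u ^ 2 := by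
    rw [div_pow, mul_pow, Real.sq_sqrt (by norm_num : (0:ℝ) ≤ 5)]
    ring
  have hg3 : gauss (Real.sqrt 3 * u) = gauss u * Real.exp (-u^2) := by
    unfold gauss
    rw [mul_pow, Real.sq_sqrt (by norm_num : (0:ℝ) ≤ 3)]
    rw [div_mul_eq_mul_div, ← Real.exp_add]
    congr 2
    ring
  have hherm := hermite_bound j (4 * u / Real.sqrt 5)
  rw [hx2] at hherm
  have hKnn : (0:ℝ) ≤ 2 ^ ((5 : ℝ)/4) * Real.sqrt Real.pi *
      Real.sqrt (5 ^ j / (Nat.factorial j)) :=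
    mul_nonneg (mul_nonneg (Real.rpow_pos_of_pos two_pos _).le (Real.sqrt_nonneg _))
      (Real.sqrt_nonneg _)
  have habs : |vPert j u| = 2 ^ ((5 : ℝ)/4) * Real.sqrt Real.pi *
      Real.sqrt (5 ^ j / (Nat.factorial j)) * gauss (Real.sqrt 3 * u) *
      |Polynomial.aeval (4 * u / Real.sqrt 5) (Polynomial.hermite j)| := by
    rw [vPert, hermiteEval, abs_mul]
    congr 1
    exact _root_.abs_of_nonneg (mul_nonneg hKnn (gauss_pos _).le)
  rw [habs, hg3]
  have hfj : (0:ℝ) < (j.factorial : ℝ) := by exact_mod_cast j.factorial_pos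
  calc 2 ^ ((5 : ℝ)/4) * Real.sqrt Real.pi * Real.sqrt (5 ^ j / (Nat.factorial j)) *
      (gauss u * Real.exp (-u^2)) *
      |Polynomial.aeval (4 * u / Real.sqrt 5) (Polynomial.hermite j)|
      ≤ 2 ^ ((5 : ℝ)/4) * Real.sqrt Real.pi * Real.sqrt (5 ^ j / (Nat.factorial j)) *
        (gauss u * Real.exp (-u^2)) *
        (Real.sqrt ((((j : ℝ) + 1) / Real.exp 1) ^ j) * Real.sqrt ((j : ℝ) + 1) *
          Real.exp (u ^ 2)) := by
        refine mul_le_mul_of_nonneg_left hherm ?_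
        exact mul_nonneg hKnn (mul_nonneg (gauss_pos _).le (Real.exp_nonneg _))
  _ = 2 ^ ((5 : ℝ)/4) * Real.sqrt Real.pi *
        (Real.sqrt (5 ^ j / (Nat.factorial j)) * Real.sqrt ((((j : ℝ) + 1) / Real.exp 1) ^ j) *
          Real.sqrt ((j : ℝ) + 1)) * gauss u := by
      have hee : Real.exp (-u^2) * Real.exp (u^2) = 1 := by rw [← Real.exp_add]; simp
      linear_combination (2 ^ ((5 : ℝ)/4) * Real.sqrt Real.pi *
        Real.sqrt (5 ^ j / (Nat.factorial j)) * gauss u *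
        Real.sqrt ((((j : ℝ) + 1) / Real.exp 1) ^ j) * Real.sqrt ((j : ℝ) + 1)) * hee
  _ ≤ 2 ^ ((5 : ℝ)/4) * Real.sqrt Real.pi *
        Real.sqrt (Real.exp 1 * 5^j * ((j:ℝ)+1)) * gauss u := by
      refine mul_le_mul_of_nonneg_right (mul_le_mul_of_nonneg_left ?_
        (mul_nonneg (Real.rpow_pos_of_pos two_pos _).le (Real.sqrt_nonneg _)))
        (gauss_pos _).le
      rw [← Real.sqrt_mul (by positivity), ← Real.sqrt_mul (by positivity)]
      apply Real.sqrt_le_sqrt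
      have h1 : (5:ℝ) ^ j / (Nat.factorial j) * ((((j : ℝ) + 1) / Real.exp 1) ^ j) ≤
          (5:ℝ) ^ j / (Nat.factorial j) * (Real.exp 1 * (j.factorial : ℝ)) :=
        mul_le_mul_of_nonneg_left (Te_le j) (by positivity)
      have h2 : (5:ℝ) ^ j / (Nat.factorial j) * (Real.exp 1 * (j.factorial : ℝ)) =
          Real.exp 1 * 5^j := by field_simp
      have h3 : (0:ℝ) ≤ (j:ℝ) + 1 := by positivity
      nlinarith [h1, h2, h3]

noncomputable def Dbd (j : ℕ) : ℝ :=
  (2:ℝ)^((5:ℝ)/4) * Real.sqrt Real.pi * Real.sqrt (Real.exp 1 * 5^j * ((j:ℝ)+1))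

lemma Dbd_nonneg (j : ℕ) : 0 ≤ Dbd j := by
  unfold Dbd
  positivity

lemma sqrt_le_of_sq {a b : ℝ} (hb : 0 ≤ b) (h : a ≤ b^2) : Real.sqrt a ≤ b := by
  calc Real.sqrt a ≤ Real.sqrt (b^2) := Real.sqrt_le_sqrt h
  _ = b := Real.sqrt_sq hb

lemma sum_Dbd (m : ℕ) (hm : 1 ≤ m) :
    ∑ k : Fin m, Dbd (2 * (k : ℕ) + 1) ≤ 6 * m * 5 ^ m := by
  have hA : (2:ℝ)^((5:ℝ)/4) ≤ 2.379 := by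
    have h4 : ((2:ℝ)^((5:ℝ)/4))^(4:ℕ) = 32 := by
      rw [← Real.rpow_natCast ((2:ℝ)^((5:ℝ)/4)) 4, ← Real.rpow_mul (by norm_num)]
      norm_num
    refine le_of_pow_le_pow_left₀ (n := 4) (by norm_num) (by norm_num) ?_
    rw [h4]; norm_num
  have hB : Real.sqrt Real.pi ≤ 1.7725 :=
    sqrt_le_of_sq (by norm_num) (by nlinarith [Real.pi_lt_d6])
  have hC : Real.sqrt (10 * Real.exp 1) ≤ 5.2138 :=
    sqrt_le_of_sq (by norm_num) (by nlinarith [Real.exp_one_lt_d9])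
  have hsm : Real.sqrt (m : ℝ) ≤ (m : ℝ) := by
    refine sqrt_le_of_sq (by positivity) ?_
    have h1 : (1:ℝ) ≤ (m:ℝ) := by exact_mod_cast hm
    nlinarith
  have hterm : ∀ k : Fin m, Dbd (2 * (k : ℕ) + 1) ≤
      ((2:ℝ)^((5:ℝ)/4) * Real.sqrt Real.pi * (Real.sqrt (10 * Real.exp 1) *
        Real.sqrt (m : ℝ))) * 5 ^ (k : ℕ) := by
    intro k
    have hk : (k : ℕ) + 1 ≤ m := k.2
    unfold Dbd
    have h5 : (Real.exp 1 * 5^(2 * (k:ℕ) + 1) * (((2 * (k:ℕ) + 1 : ℕ):ℝ)+1)) =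
        ((5 * Real.exp 1 * (2 * ((k:ℕ):ℝ) + 2)) * ((5:ℝ)^(k:ℕ))^2) := by
      push_cast
      rw [pow_succ, mul_comm 2 (k:ℕ), pow_mul]
      ring
    rw [h5, Real.sqrt_mul (by positivity), Real.sqrt_sq (by positivity)]
    have hle : Real.sqrt (5 * Real.exp 1 * (2 * ((k:ℕ):ℝ) + 2)) ≤
        Real.sqrt (10 * Real.exp 1) * Real.sqrt (m : ℝ) := by
      rw [← Real.sqrt_mul (by positivity)]
      apply Real.sqrt_le_sqrt
      have hkm : ((k:ℕ):ℝ) + 1 ≤ (m:ℝ) := by exact_mod_cast hk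
      nlinarith [Real.exp_pos 1]
    calc (2:ℝ)^((5:ℝ)/4) * Real.sqrt Real.pi *
        (Real.sqrt (5 * Real.exp 1 * (2 * ((k:ℕ):ℝ) + 2)) * 5 ^ (k:ℕ))
        ≤ (2:ℝ)^((5:ℝ)/4) * Real.sqrt Real.pi *
          ((Real.sqrt (10 * Real.exp 1) * Real.sqrt (m : ℝ)) * 5 ^ (k:ℕ)) := by
          refine mul_le_mul_of_nonneg_left (mul_le_mul_of_nonneg_right hle (by positivity)) ?_
          positivity
    _ = ((2:ℝ)^((5:ℝ)/4) * Real.sqrt Real.pi * (Real.sqrt (10 * Real.exp 1) *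
          Real.sqrt (m : ℝ))) * 5 ^ (k : ℕ) := by ring
  have hgeom : ∑ k : Fin m, (5:ℝ) ^ (k : ℕ) = ((5:ℝ)^m - 1)/4 := by
    rw [Fin.sum_univ_eq_sum_range (fun k => (5:ℝ)^k) m, geom_sum_eq (by norm_num)]
    norm_num
  calc ∑ k : Fin m, Dbd (2 * (k : ℕ) + 1)
      ≤ ∑ k : Fin m, ((2:ℝ)^((5:ℝ)/4) * Real.sqrt Real.pi * (Real.sqrt (10 * Real.exp 1) *
          Real.sqrt (m : ℝ))) * 5 ^ (k : ℕ) := Finset.sum_le_sum fun k _ => hterm k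
  _ = ((2:ℝ)^((5:ℝ)/4) * Real.sqrt Real.pi * (Real.sqrt (10 * Real.exp 1) *
        Real.sqrt (m : ℝ))) * (((5:ℝ)^m - 1)/4) := by rw [← Finset.mul_sum, hgeom]
  _ ≤ 6 * m * 5 ^ m := by
      have hAB : (2:ℝ)^((5:ℝ)/4) * Real.sqrt Real.pi ≤ 4.2168 := by
        calc (2:ℝ)^((5:ℝ)/4) * Real.sqrt Real.pi ≤ 2.379 * 1.7725 :=
              mul_le_mul hA hB (Real.sqrt_nonneg _) (by norm_num)
        _ ≤ 4.2168 := by norm_num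
      have hABC : (2:ℝ)^((5:ℝ)/4) * Real.sqrt Real.pi * Real.sqrt (10 * Real.exp 1) ≤ 21.99 := by
        calc (2:ℝ)^((5:ℝ)/4) * Real.sqrt Real.pi * Real.sqrt (10 * Real.exp 1)
            ≤ 4.2168 * 5.2138 := mul_le_mul hAB hC (Real.sqrt_nonneg _) (by norm_num)
        _ ≤ 21.99 := by norm_num
      have hABCm : (2:ℝ)^((5:ℝ)/4) * Real.sqrt Real.pi * Real.sqrt (10 * Real.exp 1) *
          Real.sqrt (m:ℝ) ≤ 21.99 * m :=
        mul_le_mul hABC hsm (Real.sqrt_nonneg _) (by norm_num)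
      have h5m : (1:ℝ) ≤ (5:ℝ)^m := one_le_pow₀ (by norm_num)
      have hm1 : (1:ℝ) ≤ (m:ℝ) := by exact_mod_cast hm
      calc (2:ℝ)^((5:ℝ)/4) * Real.sqrt Real.pi * (Real.sqrt (10 * Real.exp 1) *
            Real.sqrt (m : ℝ)) * (((5:ℝ)^m - 1)/4)
          = ((2:ℝ)^((5:ℝ)/4) * Real.sqrt Real.pi * Real.sqrt (10 * Real.exp 1) *
            Real.sqrt (m : ℝ)) * (((5:ℝ)^m - 1)/4) := by ring
      _ ≤ (21.99 * m) * (((5:ℝ)^m - 1)/4) := by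
            refine mul_le_mul_of_nonneg_right hABCm ?_
            nlinarith [h5m]
      _ ≤ 6 * m * 5 ^ m := by nlinarith [h5m, hm1]

lemma vPert_bound' (j : ℕ) (u : ℝ) : |vPert j u| ≤ Dbd j * gauss u := by
  unfold Dbd
  exact vPert_bound j u

end Aux

theorem stmt13 (d m n : ℕ) (hd : 1 ≤ d) (hm : 1 ≤ m) (hn : 2 ≤ n)
    (hcond : (m : ℝ) ^ d * 6 ^ d * 5 ^ (d * m) ≤ Real.sqrt n)
    (c : ℝ) (hc : 0 < c ∧ c < 1/2)
    (ε : ℝ) (hε : ε = c * (n : ℝ) ^ (-(1 : ℝ)/2))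
    (α : (Fin d → Fin m) → ℝ) (hα : ∀ k, α k = 0 ∨ α k = 1)
    (u : Fin d → ℝ) :
    (1 - c) * ∏ i, gauss (u i) ≤
      (∏ i, gauss (u i)) +
        ε * ∑ k : Fin d → Fin m, α k * ∏ i, vPert (2 * (k i : ℕ) + 1) (u i) ∧
    (∏ i, gauss (u i)) +
        ε * ∑ k : Fin d → Fin m, α k * ∏ i, vPert (2 * (k i : ℕ) + 1) (u i) ≤
      (1 + c) * ∏ i, gauss (u i) := by
  set P : ℝ := ∏ i, gauss (u i) with hP
  have hPpos : 0 < P := Finset.prod_pos fun i _ => gauss_pos (u i)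
  set S : ℝ := ∑ k : Fin d → Fin m, α k * ∏ i, vPert (2 * (k i : ℕ) + 1) (u i) with hS
  -- bound |S|
  have hSabs : |S| ≤ (∑ j : Fin m, Dbd (2 * (j : ℕ) + 1)) ^ d * P := by
    have h1 : |S| ≤ ∑ k : Fin d → Fin m, (∏ i, Dbd (2 * (k i : ℕ) + 1)) * P := by
      calc |S| ≤ ∑ k : Fin d → Fin m, |α k * ∏ i, vPert (2 * (k i : ℕ) + 1) (u i)| :=
            Finset.abs_sum_le_sum_abs _ _
      _ ≤ ∑ k : Fin d → Fin m, (∏ i, Dbd (2 * (k i : ℕ) + 1)) * P := by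
          refine Finset.sum_le_sum fun k _ => ?_
          rw [abs_mul, Finset.abs_prod]
          have hα1 : |α k| ≤ 1 := by rcases hα k with h | h <;> simp [h]
          have hprod : ∏ i, |vPert (2 * (k i : ℕ) + 1) (u i)| ≤
              ∏ i, (Dbd (2 * (k i : ℕ) + 1) * gauss (u i)) := by
            refine Finset.prod_le_prod (fun i _ => abs_nonneg _) fun i _ => vPert_bound' _ _
          calc |α k| * ∏ i, |vPert (2 * (k i : ℕ) + 1) (u i)| ≤
              1 * ∏ i, (Dbd (2 * (k i : ℕ) + 1) * gauss (u i)) := by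
                refine mul_le_mul hα1 hprod (Finset.prod_nonneg fun i _ => abs_nonneg _)
                  (by norm_num)
          _ = (∏ i, Dbd (2 * (k i : ℕ) + 1)) * P := by
                rw [one_mul, Finset.prod_mul_distrib]
    have h2 : ∑ k : Fin d → Fin m, (∏ i, Dbd (2 * (k i : ℕ) + 1)) * P =
        (∑ j : Fin m, Dbd (2 * (j : ℕ) + 1)) ^ d * P := by
      rw [← Finset.sum_mul]
      congr 1
      rw [← Fintype.prod_sum (fun (_ : Fin d) (j : Fin m) => Dbd (2 * (j : ℕ) + 1)),
        Finset.prod_const, Finset.card_univ, Fintype.card_fin]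
    rw [← h2]; exact h1
  -- the sum of Dbd bound
  have hB : (∑ j : Fin m, Dbd (2 * (j : ℕ) + 1)) ^ d * P ≤ Real.sqrt n * P := by
    refine mul_le_mul_of_nonneg_right ?_ hPpos.le
    calc (∑ j : Fin m, Dbd (2 * (j : ℕ) + 1)) ^ d ≤ ((6 : ℝ) * m * 5 ^ m) ^ d := by
          refine pow_le_pow_left₀ (Finset.sum_nonneg fun j _ => Dbd_nonneg _)
            (sum_Dbd m hm) d
    _ = (m : ℝ) ^ d * 6 ^ d * 5 ^ (d * m) := by
          rw [mul_pow, mul_pow, ← pow_mul, mul_comm m d]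
          ring
    _ ≤ Real.sqrt n := hcond
  -- bound ε * |S|
  have hn0 : (0:ℝ) < n := by
    have : (2:ℝ) ≤ n := by exact_mod_cast hn
    linarith
  have hsn : (0:ℝ) < Real.sqrt n := Real.sqrt_pos.mpr hn0
  have hrw : (n : ℝ) ^ (-(1 : ℝ)/2) = (Real.sqrt n)⁻¹ := by
    rw [show (-(1:ℝ))/2 = -(1/2) by norm_num, Real.rpow_neg hn0.le, Real.sqrt_eq_rpow]
  have hεpos : 0 ≤ ε := by
    rw [hε, hrw]
    exact mul_nonneg hc.1.le (by positivity)
  have hfinal : |ε * S| ≤ c * P := by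
    rw [abs_mul, _root_.abs_of_nonneg hεpos]
    calc ε * |S| ≤ ε * (Real.sqrt n * P) :=
          mul_le_mul_of_nonneg_left (hSabs.trans hB) hεpos
    _ = c * ((Real.sqrt n)⁻¹ * Real.sqrt n) * P := by rw [hε, hrw]; ring
    _ = c * P := by rw [inv_mul_cancel₀ hsn.ne']; ring
  have habs := abs_le.mp hfinal
  constructor
  · nlinarith [habs.1]
  · nlinarith [habs.2]
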